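/- Let X = {0,1}^ω be the Cantor space and x a fixed injective enumeration of the finitely supported elements of X with x_0 the identically-zero sequence. For every subset W ⊆ X the following are equivalent: (i) W is open in X; (ii) I_W is an analytic P-ideal (i.e., I_W is analytic as a subset of the Cantor space via characteristic functions and is a P-ideal); (iii) I_W is a P-ideal. -/

import Mathlib

open Set Topology MeasureTheory

/-- An ideal on `Z`: a family of subsets of `Z` closed under subsets and finite unions. -/
def IsIdeal {Z : Type*} (I : Set (Set Z)) : Prop :=
  (∀ A B : Set Z, A ⊆ B → B ∈ I → A ∈ I) ∧ ∀ A B : Set Z, A ∈ I → B ∈ I → A ∪ B ∈ I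

/-- An ideal is admissible if `Z ∉ I` and `I` contains all finite sets. -/
def IsAdmissible {Z : Type*} (I : Set (Set Z)) : Prop :=
  (Set.univ : Set Z) ∉ I ∧ ∀ A : Set Z, A.Finite → A ∈ I

/-- The subsequence of `x` indexed by the (infinite) set `A` converges to `η`:
all but finitely many of the indices in `A` give values inside any neighbourhood of `η`. -/
def ConvAlong {Z X : Type*} [TopologicalSpace X] (x : Z → X) (A : Set Z) (η : X) : Prop :=
  ∀ U ∈ nhds η, {n ∈ A | x n ∉ U}.Finite

/-- The set `Λ_x(I)` of `I`-limit points of the sequence `x`. -/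
def LambdaSet {Z X : Type*} [TopologicalSpace X] (x : Z → X) (I : Set (Set Z)) : Set X :=
  {η | ∃ A : Set Z, A ∉ I ∧ A.Infinite ∧ ConvAlong x A η}

/-- The family `𝓛_X(I)` of all sets of `I`-limit points of sequences in `X`, plus `∅`. -/
def LimitFamily (Z : Type*) (X : Type*) [TopologicalSpace X] (I : Set (Set Z)) : Set (Set X) :=
  {S | ∃ x : Z → X, S = LambdaSet x I} ∪ {∅}

/-- The Fubini product of two ideals. -/
def FubiniProd {Z W : Type*} (I : Set (Set Z)) (J : Set (Set W)) : Set (Set (Z × W)) :=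
  {S | {n : Z | {k : W | (n, k) ∈ S} ∉ J} ∈ I}

/-- The ideal `Fin` of finite subsets. -/
def FinIdeal (Z : Type*) : Set (Set Z) := {A : Set Z | A.Finite}

/-- Identification of a family of subsets of `Z` with a subset of the Cantor space
`Z → Bool` via characteristic functions. -/
def chiSet {Z : Type*} (I : Set (Set Z)) : Set (Z → Bool) :=
  {f | {n : Z | f n = true} ∈ I}

/-- Finite Borel pointclasses: `SigmaClass X n` is `Σ⁰_n` for `n ≥ 1`
(`Σ⁰₁` = open sets, `Σ⁰_{n+1}` = countable unions of complements of `Σ⁰_n` sets). -/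
def SigmaClass (X : Type*) [TopologicalSpace X] : ℕ → Set (Set X)
  | 0 => ∅
  | 1 => {s | IsOpen s}
  | (n + 2) => {s | ∃ f : ℕ → Set X, (∀ k, (f k)ᶜ ∈ SigmaClass X (n + 1)) ∧ s = ⋃ k, f k}

/-- `PiClass X n` is `Π⁰_n`: complements of `Σ⁰_n` sets. -/
def PiClass (X : Type*) [TopologicalSpace X] (n : ℕ) : Set (Set X) :=
  {s | sᶜ ∈ SigmaClass X n}

/-- Baire property: differs from an open set by a meager set. -/
def HasBP {α : Type*} [TopologicalSpace α] (s : Set α) : Prop :=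
  ∃ u : Set α, IsOpen u ∧ IsMeagre (symmDiff s u)

/-- Hereditary Baire property of an ideal on `ω`. -/
def HereditaryBP (I : Set (Set ℕ)) : Prop :=
  ∀ A : Set ℕ, A ∉ I → HasBP (chiSet {S : Set ℕ | ∃ T ∈ I, S = T ∩ A})

/-- Simply analytic subset of a topological space: the projection of a Borel subset of
`X × Y` for some uncountable Polish space `Y`. -/
def SAnalytic {X : Type*} [TopologicalSpace X] (A : Set X) : Prop :=
  ∃ (Y : Type) (tY : TopologicalSpace Y), @PolishSpace Y tY ∧ ¬Countable Y ∧
    ∃ B : Set (X × Y),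
      MeasurableSet[@borel (X × Y) (@instTopologicalSpaceProd X Y _ tY)] B ∧
      A = Prod.fst '' B

/-- `P⁺`-ideal. -/
def PPlusIdeal (I : Set (Set ℕ)) : Prop :=
  ∀ A : ℕ → Set ℕ, Antitone A → (∀ n, A n ∉ I) →
    ∃ B : Set ℕ, B ∉ I ∧ ∀ n, (B \ A n).Finite

/-- `P`-ideal. -/
def PIdeal (I : Set (Set ℕ)) : Prop :=
  ∀ A : ℕ → Set ℕ, (∀ n, A n ∈ I) → ∃ B ∈ I, ∀ n, (A n \ B).Finite

/-- `L_{x↾A}`: the set of limit points of the subsequence of `x` indexed by `A`. -/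
def LimSet {X : Type*} [TopologicalSpace X] (x : ℕ → X) (A : Set ℕ) : Set X :=
  {η | ∃ B ⊆ A, B.Infinite ∧ ConvAlong x B η}

/-- The ideal `I_W` attached to a sequence `x` and a set `W`. -/
def IdealW {X : Type*} [TopologicalSpace X] (x : ℕ → X) (W : Set X) : Set (Set ℕ) :=
  {A : Set ℕ | LimSet x A ∩ W = ∅}

/-- Rudin–Blass ordering on ideals. -/
def RudinBlassLE {Z W : Type*} (I : Set (Set Z)) (J : Set (Set W)) : Prop :=
  ∃ φ : W → Z, (∀ z : Z, (φ ⁻¹' {z}).Finite) ∧ ∀ S : Set Z, S ∈ I ↔ φ ⁻¹' S ∈ J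

/-- `Π⁰₃`-hardness of a subset of the Cantor space. -/
def Pi03Hard (B : Set (ℕ → Bool)) : Prop :=
  ∀ A ∈ PiClass (ℕ → Bool) 3, ∃ Φ : (ℕ → Bool) → (ℕ → Bool), Continuous Φ ∧ Φ ⁻¹' B = A

namespace S16

def Cyl (f : ℕ → Bool) (m : ℕ) : Set (ℕ → Bool) := {g | ∀ i < m, g i = f i}

lemma isOpen_cyl (f : ℕ → Bool) (m : ℕ) : IsOpen (Cyl f m) := by
  have : Cyl f m = ⋂ i ∈ Finset.range m, (fun g : ℕ → Bool => g i) ⁻¹' {f i} := by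
    ext g; simp [Cyl]
  rw [this]
  exact isOpen_biInter_finset fun i _ =>
    (continuous_apply i).isOpen_preimage _ (isOpen_discrete _)

lemma isClosed_cyl (f : ℕ → Bool) (m : ℕ) : IsClosed (Cyl f m) := by
  have : Cyl f m = ⋂ i ∈ Finset.range m, (fun g : ℕ → Bool => g i) ⁻¹' {f i} := by
    ext g; simp [Cyl]
  rw [this]
  exact isClosed_biInter fun i _ =>
    (IsClosed.preimage (continuous_apply i) (isClosed_discrete _))

lemma self_mem_cyl (f : ℕ → Bool) (m : ℕ) : f ∈ Cyl f m := fun _ _ => rfl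

lemma cyl_mem_nhds (f : ℕ → Bool) (m : ℕ) : Cyl f m ∈ 𝓝 f :=
  (isOpen_cyl f m).mem_nhds (self_mem_cyl f m)

lemma exists_cyl_subset {f : ℕ → Bool} {U : Set (ℕ → Bool)} (h : U ∈ 𝓝 f) :
    ∃ m, Cyl f m ⊆ U := by
  rw [nhds_pi, Filter.mem_pi] at h
  obtain ⟨I, hI, t, ht, hsub⟩ := h
  obtain ⟨m, hm⟩ := hI.bddAbove
  refine ⟨m + 1, fun g hg => hsub fun i hi => ?_⟩
  have : g i = f i := hg i (Nat.lt_succ_of_le (hm hi))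
  rw [this]
  have := ht i
  simpa [nhds_discrete] using this

lemma cyl_eq_of_agree {f g : ℕ → Bool} {m : ℕ} (h : g ∈ Cyl f m) : Cyl g m = Cyl f m := by
  ext k; constructor <;> intro hk i hi
  · rw [hk i hi]; exact h i hi
  · rw [hk i hi, h i hi]


lemma convAlong_of_cyl {B : Set ℕ} {η : ℕ → Bool}
    (h : ∀ m, {n ∈ B | x n ∉ Cyl η m}.Finite) : ConvAlong x B η := by
  intro U hU
  obtain ⟨m, hm⟩ := exists_cyl_subset hU
  exact (h m).subset fun n hn => ⟨hn.1, fun hc => hn.2 (hm hc)⟩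

lemma convAlong_mono {B B' : Set ℕ} {η : ℕ → Bool} (hBB : B' ⊆ B)
    (h : ConvAlong x B η) : ConvAlong x B' η := fun U hU =>
  (h U hU).subset fun n hn => ⟨hBB hn.1, hn.2⟩

lemma limit_unique {B : Set ℕ} {η ξ : ℕ → Bool} (hB : B.Infinite)
    (h1 : ConvAlong x B η) (h2 : ConvAlong x B ξ) : η = ξ := by
  by_contra hne
  obtain ⟨i, hi⟩ : ∃ i, η i ≠ ξ i := by
    by_contra h; push_neg at h; exact hne (funext h)
  have hf1 := h1 _ (cyl_mem_nhds η (i + 1))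
  have hf2 := h2 _ (cyl_mem_nhds ξ (i + 1))
  apply hB
  apply (hf1.union hf2).subset
  intro n hn
  by_contra hc
  simp only [mem_union, mem_setOf_eq, mem_sep_iff, not_or, not_and, not_not] at hc
  exact hi ((hc.1 hn i (Nat.lt_succ_self i)).symm.trans (hc.2 hn i (Nat.lt_succ_self i)))

/-- If the whole subsequence along `A` converges to `ξ ∉ W`, then `A ∈ I_W`. -/
lemma mem_idealW_of_conv {A : Set ℕ} {ξ : ℕ → Bool} {W : Set (ℕ → Bool)}
    (hconv : ConvAlong x A ξ) (hξ : ξ ∉ W) : A ∈ IdealW x W := by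
  rw [IdealW, mem_setOf_eq, eq_empty_iff_forall_notMem]
  rintro η ⟨⟨B, hBA, hBinf, hBconv⟩, hηW⟩
  have : η = ξ := limit_unique hBinf hBconv (convAlong_mono hBA hconv)
  exact hξ (this ▸ hηW)

/-- strictly monotone selection from infinite sets -/
lemma exists_strictMono_mem {D : ℕ → Set ℕ} (hD : ∀ k, (D k).Infinite) :
    ∃ c : ℕ → ℕ, StrictMono c ∧ ∀ k, c k ∈ D k := by
  have H : ∀ k (b : ℕ), ∃ a ∈ D k, b < a := fun k b => (hD k).exists_gt b
  choose f hf1 hf2 using H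
  refine ⟨fun k => Nat.rec (f 0 0) (fun k ih => f (k + 1) ih) k,
    strictMono_nat_of_lt_succ fun k => hf2 _ _, fun k => ?_⟩
  cases k with
  | zero => exact hf1 0 0
  | succ k => exact hf1 _ _


lemma infinite_approx (hrange : Set.range x = {f : ℕ → Bool | {k : ℕ | f k = true}.Finite})
    (ξ : ℕ → Bool) (m : ℕ) : {n : ℕ | x n ∈ Cyl ξ m}.Infinite := by
  have key : ∀ j : ℕ, ∃ n, x n = fun i => if i < m then ξ i else decide (i = m + j) := by
    intro j
    have : (fun i => if i < m then ξ i else decide (i = m + j)) ∈ Set.range x := by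
      rw [hrange]
      apply Set.Finite.subset (Set.finite_Iic (m + j))
      intro k hk
      simp only [mem_setOf_eq] at hk
      by_cases h : k < m
      · exact le_trans (le_of_lt h) (Nat.le_add_right m j)
      · simp only [if_neg h, decide_eq_true_eq] at hk
        exact le_of_eq hk
    exact this
  choose g hg using key
  refine infinite_of_injective_forall_mem (f := g) ?_ ?_
  · intro j j' hjj
    have := (hg j).symm.trans (hjj ▸ hg j')
    have h2 := congrFun this (m + j)
    simp only [if_neg (by omega : ¬ m + j < m)] at h2
    rw [decide_eq_decide] at h2
    have := h2.mp trivial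
    omega
  · intro j
    rw [mem_setOf_eq, hg j]
    intro i hi
    simp [if_pos hi]

/-- For any `ξ` there is an infinite set along which `x` converges to `ξ`. -/
lemma exists_conv_set (hrange : Set.range x = {f : ℕ → Bool | {k : ℕ | f k = true}.Finite})
    (ξ : ℕ → Bool) : ∃ A : Set ℕ, A.Infinite ∧ ConvAlong x A ξ := by
  obtain ⟨c, hc, hmem⟩ := exists_strictMono_mem (fun m => infinite_approx hrange ξ m)
  refine ⟨Set.range c, infinite_range_of_injective hc.injective, convAlong_of_cyl fun m => ?_⟩
  apply Set.Finite.subset ((Set.finite_Iio m).image c)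
  rintro n ⟨⟨j, rfl⟩, hbad⟩
  refine ⟨j, ?_, rfl⟩
  by_contra hjm
  simp only [mem_Iio, not_lt] at hjm
  refine hbad fun i hi => ?_
  have := hmem j
  simp only [mem_setOf_eq, Cyl] at this
  exact this i (lt_of_lt_of_le hi hjm)

/-- Characterization of `I_W` for open `W`. -/
lemma mem_idealW_iff (hrange : Set.range x = {f : ℕ → Bool | {k : ℕ | f k = true}.Finite})
    {W : Set (ℕ → Bool)} (hW : IsOpen W) (A : Set ℕ) :
    A ∈ IdealW x W ↔
      ∀ p : ℕ × ℕ, Cyl (x p.1) p.2 ⊆ W → {n ∈ A | x n ∈ Cyl (x p.1) p.2}.Finite := by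
  constructor
  · intro hA p hp
    by_contra hinf
    have hinf' : {n ∈ A | x n ∈ Cyl (x p.1) p.2}.Infinite := hinf
    have e := hinf'.natEmbedding
    have hcomp : IsCompact (Cyl (x p.1) p.2) := (isClosed_cyl _ _).isCompact
    have hmem : ∀ k : ℕ, x ((e k : ℕ)) ∈ Cyl (x p.1) p.2 := fun k => (e k).2.2
    obtain ⟨η, hηC, φ, hφ, htend⟩ := hcomp.tendsto_subseq hmem
    have hη : η ∈ LimSet x A ∩ W := by
      refine ⟨⟨Set.range (fun k => ((e (φ k) : ℕ))), ?_, ?_, ?_⟩, hp hηC⟩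
      · rintro n ⟨k, rfl⟩; exact (e (φ k)).2.1
      · exact infinite_range_of_injective fun a b hab =>
          hφ.injective (e.injective (Subtype.ext hab))
      · intro U hU
        obtain ⟨N, hN⟩ := Filter.eventually_atTop.mp (htend.eventually_mem hU)
        apply Set.Finite.subset ((Set.finite_Iio N).image (fun k => ((e (φ k) : ℕ))))
        rintro n ⟨⟨k, rfl⟩, hbad⟩
        refine ⟨k, ?_, rfl⟩
        by_contra hk
        simp only [mem_Iio, not_lt] at hk
        exact hbad (hN k hk)
    rw [IdealW, mem_setOf_eq] at hA
    rw [hA] at hη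
    exact hη
  · intro h
    rw [IdealW, mem_setOf_eq, eq_empty_iff_forall_notMem]
    rintro η ⟨⟨B, hBA, hBinf, hBconv⟩, hηW⟩
    obtain ⟨m, hm⟩ := exists_cyl_subset (hW.mem_nhds hηW)
    obtain ⟨n₀, hn₀⟩ := (infinite_approx hrange η m).nonempty
    have hcylEq : Cyl (x n₀) m = Cyl η m := cyl_eq_of_agree hn₀
    have hfin : {n ∈ A | x n ∈ Cyl η m}.Finite := by
      have := h (n₀, m) (by rw [hcylEq]; exact hm)
      rwa [hcylEq] at this
    have hbad : {n ∈ B | x n ∉ Cyl η m}.Finite := hBconv _ (cyl_mem_nhds η m)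
    apply hBinf
    apply (hbad.union hfin).subset
    intro n hn
    by_cases hc : x n ∈ Cyl η m
    · exact Or.inr ⟨hBA hn, hc⟩
    · exact Or.inl ⟨hn, hc⟩


lemma pIdeal_of_open (hrange : Set.range x = {f : ℕ → Bool | {k : ℕ | f k = true}.Finite})
    (hW : IsOpen W) : PIdeal (IdealW x W) := by
  intro A hA
  -- enumerate pairs
  set u : ℕ → ℕ × ℕ := fun k => Nat.pairEquiv.symm k with hu
  have husurj : Function.Surjective u := Nat.pairEquiv.symm.surjective
  -- good index sets
  set G : ℕ → Set ℕ := fun j =>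
    {n | Cyl (x (u j).1) (u j).2 ⊆ W ∧ x n ∈ Cyl (x (u j).1) (u j).2} with hG
  set F : ℕ → Set ℕ := fun k => A k ∩ ⋃ j ∈ Finset.range k, G j with hF
  have hFfin : ∀ k, (F k).Finite := by
    intro k
    have : F k ⊆ ⋃ j ∈ Finset.range k, (A k ∩ G j) := by
      rintro n ⟨hnA, hnG⟩
      simp only [mem_iUnion] at hnG ⊢
      obtain ⟨j, hj, hjG⟩ := hnG
      exact ⟨j, hj, hnA, hjG⟩
    apply Set.Finite.subset _ this
    apply Set.Finite.biUnion (Finset.range k).finite_toSet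
    intro j _
    by_cases hsub : Cyl (x (u j).1) (u j).2 ⊆ W
    · have := (mem_idealW_iff hrange hW (A k)).mp (hA k) (u j) hsub
      apply this.subset
      rintro n ⟨hnA, _, hnc⟩
      exact ⟨hnA, hnc⟩
    · have : A k ∩ G j = ∅ := by
        rw [eq_empty_iff_forall_notMem]
        rintro n ⟨_, hns, _⟩
        exact hsub hns
      rw [this]; exact finite_empty
  refine ⟨⋃ k, (A k \ F k), ?_, ?_⟩
  · rw [mem_idealW_iff hrange hW]
    intro p hp
    obtain ⟨j, hj⟩ := husurj p
    have key : {n ∈ ⋃ k, (A k \ F k) | x n ∈ Cyl (x p.1) p.2} ⊆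
        ⋃ k ∈ Finset.range (j + 1), {n ∈ A k | x n ∈ Cyl (x p.1) p.2} := by
      rintro n ⟨hn, hnc⟩
      simp only [mem_iUnion] at hn ⊢
      obtain ⟨k, hnA, hnF⟩ := hn
      refine ⟨k, ?_, hnA, hnc⟩
      rw [Finset.mem_range, Nat.lt_succ_iff]
      by_contra hk
      push_neg at hk
      apply hnF
      refine ⟨hnA, ?_⟩
      simp only [mem_iUnion, Finset.mem_range]
      refine ⟨j, hk, ?_⟩
      show Cyl (x (u j).1) (u j).2 ⊆ W ∧ x n ∈ Cyl (x (u j).1) (u j).2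
      rw [show u j = p from hj]
      exact ⟨hp, hnc⟩
    apply Set.Finite.subset _ key
    apply Set.Finite.biUnion (Finset.range (j+1)).finite_toSet
    intro k _
    exact (mem_idealW_iff hrange hW (A k)).mp (hA k) p hp
  · intro k
    apply (hFfin k).subset
    intro n hn
    rcases hn with ⟨hnA, hnB⟩
    by_contra hnF
    exact hnB (mem_iUnion.mpr ⟨k, hnA, hnF⟩)

lemma measurable_chi (hrange : Set.range x = {f : ℕ → Bool | {k : ℕ | f k = true}.Finite})
    (hW : IsOpen W) : MeasurableSet (chiSet (IdealW x W)) := by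
  have heq : chiSet (IdealW x W) =
      ⋂ p : ℕ × ℕ, {f : ℕ → Bool |
        Cyl (x p.1) p.2 ⊆ W → {n | f n = true ∧ x n ∈ Cyl (x p.1) p.2}.Finite} := by
    ext f
    simp only [chiSet, mem_setOf_eq, mem_iInter, mem_idealW_iff hrange hW]
  rw [heq]
  apply MeasurableSet.iInter
  intro p
  by_cases hp : Cyl (x p.1) p.2 ⊆ W
  · have heq2 : {f : ℕ → Bool |
        Cyl (x p.1) p.2 ⊆ W → {n | f n = true ∧ x n ∈ Cyl (x p.1) p.2}.Finite} =
        ⋃ m : ℕ, ⋂ n : ℕ, {f : ℕ → Bool | m ≤ n → x n ∈ Cyl (x p.1) p.2 → f n = false} := by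
      ext f
      simp only [mem_setOf_eq, mem_iUnion, mem_iInter]
      constructor
      · intro h
        obtain ⟨m, hm⟩ := (h hp).bddAbove
        refine ⟨m + 1, fun n hn hc => ?_⟩
        by_contra hf
        have hft : f n = true := by revert hf; cases (f n) <;> simp
        have : n ≤ m := hm (⟨hft, hc⟩ : n ∈ {n | f n = true ∧ x n ∈ Cyl (x p.1) p.2})
        omega
      · rintro ⟨m, hm⟩ _
        apply (Set.finite_Iio m).subset
        rintro n ⟨hf, hc⟩
        rw [mem_Iio]
        by_contra hn
        push_neg at hn
        rw [hm n hn hc] at hf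
        exact Bool.false_ne_true hf
    rw [heq2]
    apply MeasurableSet.iUnion
    intro m
    apply MeasurableSet.iInter
    intro n
    by_cases hc : m ≤ n ∧ x n ∈ Cyl (x p.1) p.2
    · have : {f : ℕ → Bool | m ≤ n → x n ∈ Cyl (x p.1) p.2 → f n = false} =
          (fun f : ℕ → Bool => f n) ⁻¹' {false} := by
        ext f; simp [hc.1, hc.2]
      rw [this]
      exact (measurable_pi_apply n) (measurableSet_singleton false)
    · have : {f : ℕ → Bool | m ≤ n → x n ∈ Cyl (x p.1) p.2 → f n = false} = univ := by
        ext f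
        simp only [mem_setOf_eq, mem_univ, iff_true]
        intro h1 h2
        exact absurd ⟨h1, h2⟩ hc
      rw [this]
      exact MeasurableSet.univ
  · have : {f : ℕ → Bool |
        Cyl (x p.1) p.2 ⊆ W → {n | f n = true ∧ x n ∈ Cyl (x p.1) p.2}.Finite} = univ := by
      ext f
      simp only [mem_setOf_eq, mem_univ, iff_true]
      exact fun h => absurd h hp
    rw [this]
    exact MeasurableSet.univ


lemma isOpen_of_pIdeal (hrange : Set.range x = {f : ℕ → Bool | {k : ℕ | f k = true}.Finite})
    (hP : PIdeal (IdealW x W)) : IsOpen W := by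
  rw [isOpen_iff_mem_nhds]
  by_contra hop
  push_neg at hop
  obtain ⟨η, hηW, hηn⟩ := hop
  -- for each m there is ξ in the m-cylinder of η outside W
  have hξ : ∀ m : ℕ, ∃ ξ, ξ ∈ Cyl η m ∧ ξ ∉ W := by
    intro m
    by_contra hc
    push_neg at hc
    exact hηn (Filter.mem_of_superset (cyl_mem_nhds η m) hc)
  choose ξ hξc hξW using hξ
  -- converging index sets
  have hAex : ∀ k, ∃ A : Set ℕ, A.Infinite ∧ ConvAlong x A (ξ k) :=
    fun k => exists_conv_set hrange (ξ k)
  choose A hAinf hAconv using hAex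
  have hAmem : ∀ k, A k ∈ IdealW x W := fun k => mem_idealW_of_conv (hAconv k) (hξW k)
  obtain ⟨B, hBmem, hBfin⟩ := hP A hAmem
  -- the sets from which we will pick a diagonal sequence
  set E : ℕ → Set ℕ := fun k => {n | n ∈ A k ∩ B ∧ x n ∈ Cyl (ξ k) k} with hE
  have hEinf : ∀ k, (E k).Infinite := by
    intro k
    have h1 : {n ∈ A k | x n ∉ Cyl (ξ k) k}.Finite := hAconv k _ (cyl_mem_nhds (ξ k) k)
    have h2 : (A k \ B).Finite := hBfin k
    intro hfin
    apply hAinf k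
    apply ((h1.union h2).union hfin).subset
    intro n hn
    by_cases hc : x n ∈ Cyl (ξ k) k
    · by_cases hb : n ∈ B
      · exact Or.inr ⟨⟨hn, hb⟩, hc⟩
      · exact Or.inl (Or.inr ⟨hn, hb⟩)
    · exact Or.inl (Or.inl ⟨hn, hc⟩)
  obtain ⟨c, hcmono, hcmem⟩ := exists_strictMono_mem hEinf
  -- the diagonal sequence converges to η
  have hconv : ConvAlong x (Set.range c) η := by
    apply convAlong_of_cyl
    intro m
    apply Set.Finite.subset ((Set.finite_Iio m).image c)
    rintro n ⟨⟨k, rfl⟩, hbad⟩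
    refine ⟨k, ?_, rfl⟩
    rw [mem_Iio]
    by_contra hk
    push_neg at hk
    apply hbad
    intro i hi
    have h1 : x (c k) ∈ Cyl (ξ k) k := (hcmem k).2
    have h2 : ξ k ∈ Cyl η k := hξc k
    have him : i < k := lt_of_lt_of_le hi hk
    exact (h1 i him).trans (h2 i him)
  -- contradiction with B ∈ I_W
  have hmem : η ∈ LimSet x B ∩ W := by
    refine ⟨⟨Set.range c, ?_, infinite_range_of_injective hcmono.injective, hconv⟩, hηW⟩
    rintro n ⟨k, rfl⟩
    exact (hcmem k).1.2
  rw [IdealW, mem_setOf_eq] at hBmem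
  rw [hBmem] at hmem
  exact hmem


end S16

/-- `W` is open iff `I_W` is an analytic `P`-ideal iff `I_W` is a `P`-ideal. -/
theorem stmt16 (x : ℕ → (ℕ → Bool)) (hinj : Function.Injective x)
    (hrange : Set.range x = {f : ℕ → Bool | {k : ℕ | f k = true}.Finite})
    (hzero : x 0 = fun _ => false)
    (W : Set (ℕ → Bool)) :
    (IsOpen W ↔ (MeasureTheory.AnalyticSet (chiSet (IdealW x W)) ∧ PIdeal (IdealW x W))) ∧
    (IsOpen W ↔ PIdeal (IdealW x W)) := by
    haveI : PolishSpace Bool := inferInstance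
    refine ⟨⟨fun hW => ⟨(S16.measurable_chi hrange hW).analyticSet, S16.pIdeal_of_open hrange hW⟩,
      fun h => S16.isOpen_of_pIdeal hrange h.2⟩,
      ⟨fun hW => S16.pIdeal_of_open hrange hW, fun h => S16.isOpen_of_pIdeal hrange h⟩⟩
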